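/- Suppose r₁ > 0, r₂ > 0, c < r₁ and c ≤ r₂, and set ω* := (r₁ − c)/(r₁ + r₂ − 2c). Then R(ω*) = (r₁·r₂ − c²)/(r₁ + r₂ − 2c), and R(ω*) ≤ min(r₁, r₂); in particular r₁ − R(ω*) = (r₁ − c)²/(r₁ + r₂ − 2c) and r₂ − R(ω*) = (r₂ − c)²/(r₁ + r₂ − 2c), so the optimally pooled risk never exceeds either individual risk. -/

import Mathlib

/-- The optimally pooled risk never exceeds either individual risk: for `r₁ > 0`, `r₂ > 0`,
`c < r₁`, `c ≤ r₂` and `ω* = (r₁ - c)/(r₁ + r₂ - 2c)`, one has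
`R(ω*) = (r₁r₂ - c²)/(r₁ + r₂ - 2c)`, `R(ω*) ≤ min(r₁, r₂)`, and the exact gap identities
`r₁ - R(ω*) = (r₁ - c)²/(r₁ + r₂ - 2c)` and `r₂ - R(ω*) = (r₂ - c)²/(r₁ + r₂ - 2c)`. -/
theorem pooled_risk_at_optimal_weight
    (r₁ r₂ c : ℝ) (hr₁ : 0 < r₁) (hr₂ : 0 < r₂) (hc₁ : c < r₁) (hc₂ : c ≤ r₂)
    (R : ℝ → ℝ) (hR : ∀ ω, R ω = (1 - ω) ^ 2 * r₁ + ω ^ 2 * r₂ + 2 * ω * (1 - ω) * c)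
    (ωstar : ℝ) (hωstar : ωstar = (r₁ - c) / (r₁ + r₂ - 2 * c)) :
    R ωstar = (r₁ * r₂ - c ^ 2) / (r₁ + r₂ - 2 * c) ∧
    r₁ - R ωstar = (r₁ - c) ^ 2 / (r₁ + r₂ - 2 * c) ∧
    r₂ - R ωstar = (r₂ - c) ^ 2 / (r₁ + r₂ - 2 * c) ∧
    R ωstar ≤ min r₁ r₂ := by
  have hd : 0 < r₁ + r₂ - 2 * c := by linarith
  have hd' : r₁ + r₂ - 2 * c ≠ 0 := ne_of_gt hd
  have hd'' : r₁ + r₂ - c * 2 ≠ 0 := by linarith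
  have h1 : R ωstar = (r₁ * r₂ - c ^ 2) / (r₁ + r₂ - 2 * c) := by
    rw [hR, hωstar]; field_simp; ring
  have h2 : r₁ - R ωstar = (r₁ - c) ^ 2 / (r₁ + r₂ - 2 * c) := by
    rw [h1]; field_simp; ring
  have h3 : r₂ - R ωstar = (r₂ - c) ^ 2 / (r₁ + r₂ - 2 * c) := by
    rw [h1]; field_simp; ring
  refine ⟨h1, h2, h3, le_min ?_ ?_⟩
  · nlinarith [sq_nonneg (r₁ - c), div_nonneg (sq_nonneg (r₁ - c)) hd.le]
  · nlinarith [div_nonneg (sq_nonneg (r₂ - c)) hd.le]
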